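/- Let E be an effect on a Hilbert space H and let λ, μ be scalars with 0 < λ < μ ≤ 1 such that λI ≤ E ≤ μI. If φ is a unit vector in H whose strength λ(E, P_φ) = sup{ t ∈ [0,1] : t P_φ ≤ E } equals λ, then φ is an eigenvector of E with eigenvalue λ; similarly, if ψ is a unit vector with λ(E, P_ψ) = μ, then Eψ = μψ. -/

import Mathlib

variable {H : Type*} [NormedAddCommGroup H] [InnerProductSpace ℂ H] [CompleteSpace H]

/-- An effect on a Hilbert space: a positive operator bounded above by the identity. -/
def IsEffect (A : H →L[ℂ] H) : Prop := A.IsPositive ∧ (1 - A).IsPositive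

/-- The rank-one projection onto the span of a unit vector `φ`. -/
noncomputable def projLine (φ : H) : H →L[ℂ] H := (innerSL ℂ φ).smulRight φ

/-- The strength of an effect `E` along the ray determined by a unit vector `φ`:
`λ(E, P_φ) = sup { t ∈ [0,1] : t • P_φ ≤ E }`. -/
noncomputable def strength (E : H →L[ℂ] H) (φ : H) : ℝ :=
  sSup {t : ℝ | t ∈ Set.Icc (0:ℝ) 1 ∧ (E - (t : ℂ) • projLine φ).IsPositive}

section Aux

local notation "⟪" x ", " y "⟫" => @inner ℂ _ _ x y

/-- Cauchy–Schwarz inequality for the semi-inner product induced by a positive operator. -/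
lemma aux_cs_pos (A : H →L[ℂ] H) (hA : A.IsPositive) (x y : H) :
    ‖⟪A x, y⟫‖ ^ 2 ≤ Complex.re ⟪A x, x⟫ * Complex.re ⟪A y, y⟫ := by
  have hsym : ∀ u v : H, ⟪A u, v⟫ = ⟪u, A v⟫ :=
    hA.1
  set z := ⟪A x, y⟫ with hz
  by_cases h0 : z = 0
  · simp [h0]
    exact mul_nonneg (hA.2 x) (hA.2 y)
  · set c : ℂ := z / ‖z‖ with hc
    have hzn : (‖z‖ : ℝ) ≠ 0 := norm_ne_zero_iff.mpr h0
    have hmc : z * (starRingEnd ℂ) z = ((‖z‖ : ℂ)) ^ 2 := by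
      rw [Complex.mul_conj, Complex.normSq_eq_norm_sq]
      push_cast
      ring
    have hcc : (starRingEnd ℂ) c * z = (‖z‖ : ℂ) := by
      rw [hc, map_div₀, Complex.conj_ofReal, div_mul_eq_mul_div, mul_comm, hmc, sq,
        mul_div_assoc, div_self (by exact_mod_cast hzn), mul_one]
    have hcz : c * (starRingEnd ℂ) z = (‖z‖ : ℂ) := by
      have := congrArg (starRingEnd ℂ) hcc
      simpa [mul_comm] using this
    have hnc : (starRingEnd ℂ) c * c = 1 := by
      rw [hc, map_div₀, Complex.conj_ofReal, div_mul_div_comm, mul_comm ((starRingEnd ℂ) z) z,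
        hmc, sq, div_self (by exact_mod_cast mul_ne_zero hzn hzn)]
    set α := Complex.re ⟪A x, x⟫ with hα
    set β := Complex.re ⟪A y, y⟫ with hβ
    have key : ∀ t : ℝ, 0 ≤ α * t ^ 2 + 2 * ‖z‖ * t + β := by
      intro t
      have h := hA.2 (((t : ℂ) * c) • x + y)
      rw [ContinuousLinearMap.reApplyInnerSelf_apply] at h
      have expand : ⟪A (((t : ℂ) * c) • x + y), ((t : ℂ) * c) • x + y⟫
          = ((t ^ 2 : ℝ) : ℂ) * ⟪A x, x⟫ + ((2 * ‖z‖ * t : ℝ) : ℂ) + ⟪A y, y⟫ := by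
        rw [map_add, ContinuousLinearMap.map_smul, inner_add_left, inner_add_right,
          inner_add_right, inner_smul_left, inner_smul_right, inner_smul_right,
          inner_smul_left]
        have h1 : ⟪A y, x⟫ = (starRingEnd ℂ) z := by
          rw [hz, hsym y x, ← inner_conj_symm, hsym x y]
        rw [h1, ← hz, map_mul, Complex.conj_ofReal]
        push_cast
        linear_combination ((t : ℂ) ^ 2 * ⟪A x, x⟫) * hnc + (t : ℂ) * hcc + (t : ℂ) * hcz
      rw [expand] at h
      simp only [Complex.add_re, Complex.mul_re, Complex.ofReal_re, Complex.ofReal_im,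
        zero_mul, sub_zero, RCLike.re_to_complex, ← hα, ← hβ] at h
      linarith
    have hα0 : 0 ≤ α := hA.2 x
    have hβ0 : 0 ≤ β := hA.2 y
    rcases eq_or_lt_of_le hα0 with hα0' | hα0'
    · exfalso
      have hz0 : (0:ℝ) < ‖z‖ := lt_of_le_of_ne (norm_nonneg z) (Ne.symm hzn)
      have e : α * (-(β+1)/(2*‖z‖))^2 + 2*‖z‖*(-(β+1)/(2*‖z‖)) + β = -1 := by
        have hza : ‖z‖ ≠ 0 := hzn
        rw [← hα0']
        field_simp
        ring
      have := key (-(β+1)/(2*‖z‖))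
      rw [e] at this
      linarith
    · have hαne : α ≠ 0 := ne_of_gt hα0'
      have e : α * (-‖z‖/α)^2 + 2*‖z‖*(-‖z‖/α) + β = β - ‖z‖^2/α := by
        field_simp
        ring
      have h4 := key (-‖z‖/α)
      rw [e] at h4
      have h5 : ‖z‖^2/α ≤ β := by linarith
      have := (div_le_iff₀ hα0').mp h5
      linarith

/-- A positive operator with vanishing quadratic form at `x` kills `x`. -/
lemma aux_pos_inner_zero (A : H →L[ℂ] H) (hA : A.IsPositive)
    (x : H) (h : Complex.re ⟪A x, x⟫ = 0) : A x = 0 := by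
  have h1 := aux_cs_pos A hA x (A x)
  rw [h, zero_mul] at h1
  have h6 : ⟪A x, A x⟫ = 0 := by
    have hn := norm_nonneg (⟪A x, A x⟫)
    have : ‖⟪A x, A x⟫‖ = 0 := by nlinarith
    exact norm_eq_zero.mp this
  exact inner_self_eq_zero.mp h6

lemma aux_expand_sym (A : H →L[ℂ] H) (hsym : ∀ u v : H, ⟪A u, v⟫ = ⟪u, A v⟫) (c : ℂ) (φ y : H) :
    Complex.re ⟪A (c • φ + y), c • φ + y⟫
      = Complex.normSq c * Complex.re ⟪A φ, φ⟫
        + 2 * Complex.re ((starRingEnd ℂ) c * ⟪A φ, y⟫) + Complex.re ⟪A y, y⟫ := by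
  have h1 : ⟪A y, φ⟫ = (starRingEnd ℂ) ⟪A φ, y⟫ := by
    rw [hsym y φ, ← inner_conj_symm, hsym φ y]
  have hns : ((Complex.normSq c : ℝ) : ℂ) = (starRingEnd ℂ) c * c :=
    Complex.normSq_eq_conj_mul_self
  have expand : ⟪A (c • φ + y), c • φ + y⟫
      = ((Complex.normSq c : ℝ) : ℂ) * ⟪A φ, φ⟫
        + ((starRingEnd ℂ) c * ⟪A φ, y⟫ + (starRingEnd ℂ) ((starRingEnd ℂ) c * ⟪A φ, y⟫))
        + ⟪A y, y⟫ := by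
    rw [map_add, ContinuousLinearMap.map_smul, inner_add_left, inner_add_right, inner_add_right,
      inner_smul_left, inner_smul_right, inner_smul_right, inner_smul_left, h1, map_mul,
      Complex.conj_conj]
    linear_combination (-⟪A φ, φ⟫) * hns
  rw [expand]
  simp only [Complex.add_re, Complex.mul_re, Complex.ofReal_re, Complex.ofReal_im, zero_mul,
    sub_zero, Complex.conj_re]
  ring

lemma aux_arith_key (l m a b q r w : ℝ) (hl : 0 < l) (hlm : l < m)
    (ha : 0 ≤ a) (hb : 0 ≤ b) (hq : 0 ≤ q) (hr : 0 ≤ r) (hw : 0 ≤ w)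
    (f2 : r ^ 2 ≤ a * b) (f3 : b ≤ (m - l) * w) :
    a * l / m * q ^ 2 ≤ q ^ 2 * a - 2 * (q * r) + b + l * w := by
  have hm : 0 < m := hl.trans hlm
  rw [div_mul_eq_mul_div, div_le_iff₀ hm]
  rcases eq_or_lt_of_le hb with hb0 | hb0
  · have hr0 : r = 0 := by nlinarith
    subst hr0
    rw [← hb0]
    nlinarith [mul_nonneg (mul_nonneg ha (mul_nonneg hq hq)) (sub_pos.mpr hlm).le,
      mul_nonneg (mul_nonneg hl.le hw) hm.le]
  · have hml : (0:ℝ) < m - l := sub_pos.mpr hlm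
    have h2 : 2 * (m * ((m - l) * (q * r))) * b ≤ (a * q ^ 2 * (m - l) ^ 2 + m ^ 2 * b) * b := by
      nlinarith [sq_nonneg ((m - l) * (q * r) - m * b),
        mul_le_mul_of_nonneg_left f2 (by positivity : (0:ℝ) ≤ (m - l) ^ 2 * q ^ 2)]
    have h1 : 2 * (m * ((m - l) * (q * r))) ≤ a * q ^ 2 * (m - l) ^ 2 + m ^ 2 * b :=
      le_of_mul_le_mul_right h2 hb0
    have h4 : a * l * q ^ 2 * (m - l) ≤ ((q ^ 2 * a - 2 * (q * r) + b + l * w) * m) * (m - l) := by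
      nlinarith [h1, mul_le_mul_of_nonneg_left f3 (mul_nonneg hl.le hm.le)]
    exact le_of_mul_le_mul_right h4 hml

lemma aux_projLine_apply (φ v : H) : projLine φ v = ⟪φ, v⟫ • φ := by
  simp [projLine, ContinuousLinearMap.smulRight_apply]

lemma aux_projLine_selfAdjoint (φ : H) : IsSelfAdjoint (projLine φ) := by
  rw [ContinuousLinearMap.isSelfAdjoint_iff_isSymmetric]
  intro u v
  simp only [ContinuousLinearMap.coe_coe, projLine, ContinuousLinearMap.smulRight_apply,
    innerSL_apply_apply, inner_smul_left, inner_smul_right]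
  rw [← inner_conj_symm u φ]
  ring

lemma aux_smul_selfAdjoint (t : ℝ) (P : H →L[ℂ] H) (h : IsSelfAdjoint P) :
    IsSelfAdjoint ((t : ℂ) • P) := by
  rw [IsSelfAdjoint, star_smul, RCLike.star_def, Complex.conj_ofReal, h.star_eq]

lemma aux_unit_inner {χ : H} (hχ : ‖χ‖ = 1) : ⟪χ, χ⟫ = 1 := by
  rw [inner_self_eq_norm_sq_to_K, hχ]
  norm_num

/-- Evaluating the positivity of `E - t P_χ` at the unit vector `χ`. -/
lemma aux_eval (E : H →L[ℂ] H) (t : ℝ) (χ : H) (hχ : ‖χ‖ = 1)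
    (h : (E - (t : ℂ) • projLine χ).IsPositive) :
    t ≤ Complex.re ⟪E χ, χ⟫ := by
  have h1 := h.2 χ
  rw [ContinuousLinearMap.reApplyInnerSelf_apply] at h1
  simp only [RCLike.re_to_complex] at h1
  rw [ContinuousLinearMap.sub_apply, ContinuousLinearMap.smul_apply, aux_projLine_apply,
    aux_unit_inner hχ, one_smul, inner_sub_left, inner_smul_left, aux_unit_inner hχ,
    Complex.conj_ofReal, mul_one] at h1
  simp only [Complex.sub_re, Complex.ofReal_re] at h1
  linarith

lemma aux_smul_one_sub (M E : H →L[ℂ] H) (mm : ℝ) (hM : M = (mm : ℂ) • 1 - E) (v : H) :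
    Complex.re ⟪M v, v⟫ = mm * ‖v‖ ^ 2 - Complex.re ⟪E v, v⟫ := by
  rw [hM, ContinuousLinearMap.sub_apply, ContinuousLinearMap.smul_apply,
    ContinuousLinearMap.one_apply, inner_sub_left, inner_smul_left, Complex.conj_ofReal,
    inner_self_eq_norm_sq_to_K]
  simp only [← Complex.ofReal_pow, Complex.sub_re, Complex.mul_re, Complex.ofReal_re,
    Complex.ofReal_im, zero_mul, sub_zero]
  norm_cast

end Aux

/-- If `λ I ≤ E ≤ μ I` with `0 < λ < μ ≤ 1`, a unit vector along which the
strength of `E` is `λ` (resp. `μ`) is an eigenvector of `E` with eigenvalue `λ` (resp. `μ`). -/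
theorem strength_extremal_eigenvector (E : H →L[ℂ] H) (hE : IsEffect E)
    (l m : ℝ) (hl : 0 < l) (hlm : l < m) (hm : m ≤ 1)
    (hlE : (E - (l : ℂ) • (1 : H →L[ℂ] H)).IsPositive)
    (hEm : ((m : ℂ) • (1 : H →L[ℂ] H) - E).IsPositive)
    (φ ψ : H) (hφ : ‖φ‖ = 1) (hψ : ‖ψ‖ = 1)
    (hsφ : strength E φ = l) (hsψ : strength E ψ = m) :
    E φ = (l : ℂ) • φ ∧ E ψ = (m : ℂ) • ψ := by
  have hm0 : (0 : ℝ) < m := hl.trans hlm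
  have hzero_mem : ∀ χ : H,
      (0:ℝ) ∈ {t : ℝ | t ∈ Set.Icc (0:ℝ) 1 ∧ (E - (t : ℂ) • projLine χ).IsPositive} := by
    intro χ
    refine ⟨⟨le_refl 0, zero_le_one⟩, ?_⟩
    have : (((0:ℝ) : ℂ)) • projLine χ = 0 := by norm_num
    rw [this, sub_zero]
    exact hE.1
  have hbdd : ∀ χ : H,
      BddAbove {t : ℝ | t ∈ Set.Icc (0:ℝ) 1 ∧ (E - (t : ℂ) • projLine χ).IsPositive} :=
    fun χ => ⟨1, fun t ht => ht.1.2⟩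
  -- ψ part
  have hψ2 : E ψ = (m : ℂ) • ψ := by
    have h1 : m ≤ Complex.re (inner ℂ (E ψ) ψ : ℂ) := by
      rw [← hsψ, strength]
      exact csSup_le ⟨0, hzero_mem ψ⟩ (fun t ht => aux_eval E t ψ hψ ht.2)
    have h2 := aux_smul_one_sub ((m : ℂ) • (1 : H →L[ℂ] H) - E) E m rfl ψ
    have h4 := hEm.2 ψ
    rw [ContinuousLinearMap.reApplyInnerSelf_apply] at h4
    simp only [RCLike.re_to_complex] at h4
    rw [h2, hψ] at h4
    have h3 : Complex.re (inner ℂ (((m : ℂ) • (1 : H →L[ℂ] H) - E) ψ) ψ : ℂ) = 0 := by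
      rw [h2, hψ]
      norm_num
      linarith
    have h5 := aux_pos_inner_zero _ hEm ψ h3
    rw [ContinuousLinearMap.sub_apply, ContinuousLinearMap.smul_apply,
      ContinuousLinearMap.one_apply, sub_eq_zero] at h5
    exact h5.symm
  refine ⟨?_, hψ2⟩
  -- φ part
  by_contra hne
  have hAsym : ∀ u v : H, (inner ℂ ((E - (l : ℂ) • (1 : H →L[ℂ] H)) u) v : ℂ)
      = inner ℂ u ((E - (l : ℂ) • (1 : H →L[ℂ] H)) v) :=
    hlE.1
  have hAapp : ∀ v : H, (E - (l : ℂ) • (1 : H →L[ℂ] H)) v = E v - (l : ℂ) • v := by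
    intro v
    rw [ContinuousLinearMap.sub_apply, ContinuousLinearMap.smul_apply,
      ContinuousLinearMap.one_apply]
  have hunitφ : (inner ℂ φ φ : ℂ) = 1 := aux_unit_inner hφ
  set a := Complex.re (inner ℂ ((E - (l : ℂ) • (1 : H →L[ℂ] H)) φ) φ : ℂ) with ha_def
  have ha0 : (0:ℝ) ≤ a := hlE.2 φ
  have hAφ : (E - (l : ℂ) • (1 : H →L[ℂ] H)) φ ≠ 0 := by
    intro h0
    apply hne
    rw [hAapp φ, sub_eq_zero] at h0
    exact h0
  have ha : (0:ℝ) < a :=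
    lt_of_le_of_ne ha0 (fun h => hAφ (aux_pos_inner_zero _ hlE φ h.symm))
  -- the quadratic form of E at v, in terms of that of A
  have hrE : ∀ v : H, Complex.re (inner ℂ (E v) v : ℂ)
      = Complex.re (inner ℂ ((E - (l : ℂ) • (1 : H →L[ℂ] H)) v) v : ℂ) + l * ‖v‖ ^ 2 := by
    intro v
    rw [hAapp, inner_sub_left, inner_smul_left, Complex.conj_ofReal]
    have hv : Complex.re (inner ℂ v v : ℂ) = ‖v‖ ^ 2 := inner_self_eq_norm_sq (𝕜 := ℂ) v
    simp only [Complex.sub_re, Complex.mul_re, Complex.ofReal_re, Complex.ofReal_im,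
      zero_mul, sub_zero, hv]
    ring
  have hrEφ : Complex.re (inner ℂ (E φ) φ : ℂ) = a + l := by
    rw [hrE φ, hφ, ← ha_def]
    ring
  have hEφm : Complex.re (inner ℂ (E φ) φ : ℂ) ≤ m := by
    have h4 := hEm.2 φ
    rw [ContinuousLinearMap.reApplyInnerSelf_apply] at h4
    simp only [RCLike.re_to_complex] at h4
    rw [aux_smul_one_sub ((m : ℂ) • (1 : H →L[ℂ] H) - E) E m rfl φ, hφ] at h4
    norm_num at h4
    linarith
  have ham : a ≤ m - l := by linarith
  set t0 : ℝ := l + a * l / m with ht0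
  have ht0m : t0 ≤ m := by
    rw [ht0]
    have : a * l / m ≤ m - l := by
      rw [div_le_iff₀ hm0]
      nlinarith
    linarith
  have ht00 : 0 ≤ t0 := by
    rw [ht0]
    positivity
  -- positivity of E - t0 • P_φ
  have hpos : (E - ((t0 : ℝ) : ℂ) • projLine φ).IsPositive := by
    constructor
    · exact (hE.1.1).sub (ContinuousLinearMap.isSelfAdjoint_iff_isSymmetric.mp
        (aux_smul_selfAdjoint t0 _ (aux_projLine_selfAdjoint φ)))
    · intro x
      rw [ContinuousLinearMap.reApplyInnerSelf_apply]
      simp only [RCLike.re_to_complex]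
      set c : ℂ := (inner ℂ φ x : ℂ) with hc
      set q : ℝ := ‖c‖ with hq_def
      set y : H := x - c • φ with hy
      have hxy : x = c • φ + y := by rw [hy]; abel
      have hyφ : (inner ℂ φ y : ℂ) = 0 := by
        rw [hy, inner_sub_right, inner_smul_right, hunitφ, mul_one, ← hc, sub_self]
      set b := Complex.re (inner ℂ ((E - (l : ℂ) • (1 : H →L[ℂ] H)) y) y : ℂ) with hb_def
      set r : ℝ := ‖(inner ℂ ((E - (l : ℂ) • (1 : H →L[ℂ] H)) φ) y : ℂ)‖ with hr_def
      have hb0 : (0:ℝ) ≤ b := hlE.2 y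
      have f2 : r ^ 2 ≤ a * b := aux_cs_pos _ hlE φ y
      have f3 : b ≤ (m - l) * ‖y‖ ^ 2 := by
        have h4 := hEm.2 y
        rw [ContinuousLinearMap.reApplyInnerSelf_apply] at h4
        simp only [RCLike.re_to_complex] at h4
        rw [aux_smul_one_sub ((m : ℂ) • (1 : H →L[ℂ] H) - E) E m rfl y, hrE y] at h4
        linarith
      have hgoal_eq : Complex.re (inner ℂ ((E - ((t0 : ℝ) : ℂ) • projLine φ) x) x : ℂ)
          = Complex.re (inner ℂ (E x) x : ℂ) - t0 * Complex.normSq c := by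
        rw [ContinuousLinearMap.sub_apply, ContinuousLinearMap.smul_apply, aux_projLine_apply,
          ← hc, inner_sub_left, inner_smul_left, inner_smul_left, ← hc, Complex.conj_ofReal,
          ← Complex.normSq_eq_conj_mul_self]
        simp only [Complex.sub_re, Complex.mul_re, Complex.ofReal_re, Complex.ofReal_im,
          zero_mul, sub_zero]
      rw [hgoal_eq]
      have hAx : Complex.re (inner ℂ ((E - (l : ℂ) • (1 : H →L[ℂ] H)) x) x : ℂ)
          = Complex.normSq c * a
            + 2 * Complex.re ((starRingEnd ℂ) c
                * (inner ℂ ((E - (l : ℂ) • (1 : H →L[ℂ] H)) φ) y : ℂ)) + b := by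
        have h7 := aux_expand_sym _ hAsym c φ y
        rw [← hxy] at h7
        exact h7
      have hx2 : ‖x‖ ^ 2 = Complex.normSq c + ‖y‖ ^ 2 := by
        have h8 := aux_expand_sym (1 : H →L[ℂ] H) (fun u v => by
          simp only [ContinuousLinearMap.one_apply]) c φ y
        rw [← hxy] at h8
        simp only [ContinuousLinearMap.one_apply, hyφ, mul_zero, Complex.zero_re] at h8
        have hxx : Complex.re (inner ℂ x x : ℂ) = ‖x‖ ^ 2 := inner_self_eq_norm_sq (𝕜 := ℂ) x
        have hφφ : Complex.re (inner ℂ φ φ : ℂ) = ‖φ‖ ^ 2 := inner_self_eq_norm_sq (𝕜 := ℂ) φ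
        have hyy : Complex.re (inner ℂ y y : ℂ) = ‖y‖ ^ 2 := inner_self_eq_norm_sq (𝕜 := ℂ) y
        rw [hxx, hφφ, hyy, hφ] at h8
        rw [h8]
        ring
      have hmid : -(q * r) ≤ Complex.re ((starRingEnd ℂ) c
          * (inner ℂ ((E - (l : ℂ) • (1 : H →L[ℂ] H)) φ) y : ℂ)) := by
        have h7 := Complex.abs_re_le_norm ((starRingEnd ℂ) c
          * (inner ℂ ((E - (l : ℂ) • (1 : H →L[ℂ] H)) φ) y : ℂ))
        have h8 : ‖(starRingEnd ℂ) c
            * (inner ℂ ((E - (l : ℂ) • (1 : H →L[ℂ] H)) φ) y : ℂ)‖ = q * r := by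
          rw [norm_mul, Complex.norm_conj, hq_def, hr_def]
        rw [h8] at h7
        exact (abs_le.mp h7).1
      have hq2 : Complex.normSq c = q ^ 2 := by
        rw [hq_def, Complex.normSq_eq_norm_sq]
      have harith := aux_arith_key l m a b q r (‖y‖ ^ 2) hl hlm ha0 hb0 (norm_nonneg c)
        (norm_nonneg _) (sq_nonneg _) f2 f3
      rw [hrE x, hAx, hx2, hq2, ht0]
      linarith
  -- t0 belongs to the strength set, contradiction
  have hmem : t0 ∈ {t : ℝ | t ∈ Set.Icc (0:ℝ) 1 ∧ (E - (t : ℂ) • projLine φ).IsPositive} :=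
    ⟨⟨ht00, le_trans ht0m hm⟩, hpos⟩
  have hle : t0 ≤ strength E φ := by
    rw [strength]
    exact le_csSup (hbdd φ) hmem
  rw [hsφ] at hle
  have hpos' : 0 < a * l / m := by positivity
  rw [ht0] at hle
  linarith
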